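/- For all sufficiently small δ > 0 and all sufficiently large n, with k = ⌈√δ · n⌉: for every set C ⊆ {−1,1}ⁿ with |C| ≥ 2^(n − δn − 1), there exist x₁, …, x_k ∈ C such that for every j ∈ {1,…,k}, the Euclidean norm of the orthogonal projection of x_j onto span{x₁,…,x_{j−1}} is at most 2·δ^(1/4)·√n. -/

import Mathlib

open Finset

section NearOrthogonalAux
open MeasureTheory Real

local notation "⟪" x ", " y "⟫" => @inner ℝ _ _ x y

noncomputable section


/-- The discrete cube `{-1,1}ⁿ` inside Euclidean space. -/
def cube (n : ℕ) : Finset (EuclideanSpace ℝ (Fin n)) :=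
  (Fintype.piFinset fun _ : Fin n => ({-1, 1} : Finset ℝ)).map
    (WithLp.equiv 2 (Fin n → ℝ)).symm.toEmbedding

lemma mem_cube {n : ℕ} {x : EuclideanSpace ℝ (Fin n)} :
    x ∈ cube n ↔ ∀ i, x i = -1 ∨ x i = 1 := by
  simp [cube, Finset.mem_map_equiv, Fintype.mem_piFinset]

lemma gauss_integrable (a : ℝ) :
    Integrable (fun t : ℝ => Real.exp (-(1/2) * t ^ 2 + a * t)) := by
  have h : (fun t : ℝ => Real.exp (-(1/2) * t ^ 2 + a * t))
      = fun t : ℝ => Real.exp (a ^ 2 / 2) * Real.exp (-(1/2) * (t - a) ^ 2) := by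
    funext t
    rw [← Real.exp_add]
    ring_nf
  rw [h]
  exact ((integrable_exp_neg_mul_sq (by norm_num : (0:ℝ) < 1/2)).comp_sub_right a).const_mul _

lemma gauss_integral (a : ℝ) :
    ∫ t : ℝ, Real.exp (-(1/2) * t ^ 2 + a * t)
      = Real.sqrt (2 * π) * Real.exp (a ^ 2 / 2) := by
  have h : (fun t : ℝ => Real.exp (-(1/2) * t ^ 2 + a * t))
      = fun t : ℝ => Real.exp (a ^ 2 / 2) * Real.exp (-(1/2) * (t - a) ^ 2) := by
    funext t
    rw [← Real.exp_add]
    ring_nf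
  rw [h, MeasureTheory.integral_const_mul,
    integral_sub_right_eq_self (fun t : ℝ => Real.exp (-(1/2) * t ^ 2)) a,
    integral_gaussian, show π / (1/2 : ℝ) = 2 * π by ring, mul_comm]


lemma cube_exp_sum (n : ℕ) (w : EuclideanSpace ℝ (Fin n)) :
    ∑ x ∈ cube n, Real.exp ⟪w, x⟫ ≤ 2 ^ n * Real.exp (⟪w, w⟫ / 2) := by
  have hinner : ∀ y : Fin n → ℝ,
      ⟪w, ((WithLp.equiv 2 (Fin n → ℝ)).symm y : EuclideanSpace ℝ (Fin n))⟫
        = ∑ j, w j * y j := by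
    intro y
    simp [PiLp.inner_apply, RCLike.inner_apply, conj_trivial]
    exact Finset.sum_congr rfl fun j _ => mul_comm _ _
  have h1 : ∑ x ∈ cube n, Real.exp ⟪w, x⟫
      = ∏ j, (Real.exp (-(w j)) + Real.exp (w j)) := by
    rw [cube, Finset.sum_map]
    calc ∑ y ∈ Fintype.piFinset (fun _ : Fin n => ({-1, 1} : Finset ℝ)),
          Real.exp ⟪w, ((WithLp.equiv 2 (Fin n → ℝ)).symm.toEmbedding y :
            EuclideanSpace ℝ (Fin n))⟫
        = ∑ y ∈ Fintype.piFinset (fun _ : Fin n => ({-1, 1} : Finset ℝ)),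
            ∏ j, Real.exp (w j * y j) := by
          refine Finset.sum_congr rfl fun y _ => ?_
          rw [show ((WithLp.equiv 2 (Fin n → ℝ)).symm.toEmbedding y :
            EuclideanSpace ℝ (Fin n)) = (WithLp.equiv 2 (Fin n → ℝ)).symm y from rfl,
            hinner y, Real.exp_sum]
      _ = ∏ j, ∑ s ∈ ({-1, 1} : Finset ℝ), Real.exp (w j * s) := by
          rw [Finset.prod_univ_sum]
      _ = ∏ j, (Real.exp (-(w j)) + Real.exp (w j)) := by
          refine Finset.prod_congr rfl fun j _ => ?_
          rw [Finset.sum_pair (by norm_num : (-1 : ℝ) ≠ 1)]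
          ring_nf
  have h2 : ∏ j, (Real.exp (-(w j)) + Real.exp (w j))
      ≤ ∏ j : Fin n, (2 * Real.exp ((w j) ^ 2 / 2)) := by
    refine Finset.prod_le_prod (fun j _ => by positivity) (fun j _ => ?_)
    have := Real.cosh_le_exp_half_sq (w j)
    rw [Real.cosh_eq] at this
    linarith
  have h3 : ∏ j : Fin n, (2 * Real.exp ((w j) ^ 2 / 2))
      = 2 ^ n * Real.exp (⟪w, w⟫ / 2) := by
    rw [Finset.prod_mul_distrib, Finset.prod_const, ← Real.exp_sum]
    have : ⟪w, w⟫ = ∑ j, (w j) ^ 2 := by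
      simp only [PiLp.inner_apply, RCLike.inner_apply, conj_trivial, sq]
    rw [this, Finset.card_univ, Fintype.card_fin, Finset.sum_div]
  rw [h1]
  exact h2.trans_eq h3


lemma sqrt2pi_pos : 0 < Real.sqrt (2 * π) := Real.sqrt_pos.mpr (by positivity)

/-- Key mgf bound: for an orthonormal family `v` of size `d`,
`∑_{x ∈ cube} exp((∑ ⟪v i, x⟫²)/4) ≤ 2^n √2^d`. -/
lemma keyA {n d : ℕ} (v : Fin d → EuclideanSpace ℝ (Fin n)) (hv : Orthonormal ℝ v) :
    ∑ x ∈ cube n, Real.exp ((∑ i, ⟪v i, x⟫ ^ 2) / 4)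
      ≤ 2 ^ n * Real.sqrt 2 ^ d := by
  set γ : ℝ := Real.sqrt (2 * π) with hγdef
  have hγ : 0 < γ := sqrt2pi_pos
  -- the integrand family
  set F : EuclideanSpace ℝ (Fin n) → (Fin d → ℝ) → ℝ :=
    fun x t => ∏ i, (γ⁻¹ * Real.exp (-(1/2) * (t i) ^ 2 + (⟪v i, x⟫ / Real.sqrt 2) * t i))
    with hF
  -- single Gaussian integral
  have hsingle : ∀ c : ℝ,
      ∫ t : ℝ, γ⁻¹ * Real.exp (-(1/2) * t ^ 2 + (c / Real.sqrt 2) * t)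
        = Real.exp (c ^ 2 / 4) := by
    intro c
    rw [MeasureTheory.integral_const_mul, gauss_integral, ← mul_assoc,
      inv_mul_cancel₀ hγ.ne', one_mul]
    congr 1
    rw [div_pow, Real.sq_sqrt (by norm_num : (0:ℝ) ≤ 2)]
    ring
  -- step 1 : pointwise identity
  have hstep1 : ∀ x : EuclideanSpace ℝ (Fin n),
      Real.exp ((∑ i, ⟪v i, x⟫ ^ 2) / 4) = ∫ t : Fin d → ℝ, F x t := by
    intro x
    rw [hF]
    rw [MeasureTheory.volume_pi, MeasureTheory.integral_fintype_prod_eq_prod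
      (fun i s => γ⁻¹ * Real.exp (-(1/2) * s ^ 2 + (⟪v i, x⟫ / Real.sqrt 2) * s))]
    rw [Finset.sum_div, Real.exp_sum]
    exact Finset.prod_congr rfl fun i _ => (hsingle _).symm
  have hFint : ∀ x : EuclideanSpace ℝ (Fin n), Integrable (F x) := by
    intro x
    exact Integrable.fintype_prod (fun i => (gauss_integrable _).const_mul _)
  -- the dominating function
  set h : ℝ → ℝ := fun s => γ⁻¹ * Real.exp (-(1/4) * s ^ 2) with hh
  have hhint : Integrable h :=
    (integrable_exp_neg_mul_sq (by norm_num : (0:ℝ) < 1/4)).const_mul _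
  set G : (Fin d → ℝ) → ℝ := fun t => 2 ^ n * ∏ i, h (t i) with hG
  have hGint : Integrable G := (Integrable.fintype_prod fun _ => hhint).const_mul _
  -- pointwise bound
  have hpoint : ∀ t : Fin d → ℝ, ∑ x ∈ cube n, F x t ≤ G t := by
    intro t
    set w : EuclideanSpace ℝ (Fin n) := ∑ i, (t i / Real.sqrt 2) • v i with hw
    have hFsplit : ∀ x, F x t
        = (∏ i, γ⁻¹ * Real.exp (-(1/2) * (t i) ^ 2)) * Real.exp ⟪w, x⟫ := by
      intro x
      have hwx : ⟪w, x⟫ = ∑ i, (⟪v i, x⟫ / Real.sqrt 2) * t i := by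
        rw [hw, sum_inner]
        refine Finset.sum_congr rfl fun i _ => ?_
        rw [real_inner_smul_left]
        ring
      rw [hwx, Real.exp_sum, hF, ← Finset.prod_mul_distrib]
      refine Finset.prod_congr rfl fun i _ => ?_
      rw [mul_assoc, ← Real.exp_add]
    have hww : ⟪w, w⟫ = ∑ i, (t i) ^ 2 / 2 := by
      rw [hw, hv.inner_sum]
      refine Finset.sum_congr rfl fun i _ => ?_
      rw [RCLike.conj_to_real]
      rw [div_mul_div_comm, Real.mul_self_sqrt (by norm_num : (0:ℝ) ≤ 2), sq]
    calc ∑ x ∈ cube n, F x t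
        = (∏ i, γ⁻¹ * Real.exp (-(1/2) * (t i) ^ 2)) * ∑ x ∈ cube n, Real.exp ⟪w, x⟫ := by
          rw [Finset.mul_sum]; exact Finset.sum_congr rfl fun x _ => hFsplit x
      _ ≤ (∏ i, γ⁻¹ * Real.exp (-(1/2) * (t i) ^ 2)) * (2 ^ n * Real.exp (⟪w, w⟫ / 2)) := by
          refine mul_le_mul_of_nonneg_left (cube_exp_sum n w) ?_
          exact Finset.prod_nonneg fun i _ => by positivity
      _ = G t := by
          rw [hG, hww]
          have : Real.exp ((∑ i, (t i) ^ 2 / 2) / 2) = ∏ i, Real.exp ((t i) ^ 2 / 4) := by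
            rw [← Real.exp_sum]
            congr 1
            rw [← Finset.sum_div, ← Finset.sum_div, div_div]
            norm_num
          rw [this]
          rw [show ∀ a b c : ℝ, a * (b * c) = b * (a * c) from fun a b c => by ring]
          congr 1
          rw [← Finset.prod_mul_distrib]
          refine Finset.prod_congr rfl fun i _ => ?_
          rw [hh, mul_assoc, ← Real.exp_add]
          congr 2
          ring
  -- integrate
  have hint_h : ∫ s : ℝ, h s = Real.sqrt 2 := by
    rw [hh]
    simp only
    rw [MeasureTheory.integral_const_mul, integral_gaussian,
      show π / (1/4 : ℝ) = 2 * π * 2 by ring, Real.sqrt_mul (by positivity) 2,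
      ← mul_assoc, inv_mul_cancel₀ hγ.ne', one_mul]
  calc ∑ x ∈ cube n, Real.exp ((∑ i, ⟪v i, x⟫ ^ 2) / 4)
      = ∑ x ∈ cube n, ∫ t : Fin d → ℝ, F x t :=
        Finset.sum_congr rfl fun x _ => hstep1 x
    _ = ∫ t : Fin d → ℝ, ∑ x ∈ cube n, F x t :=
        (MeasureTheory.integral_finset_sum _ fun x _ => hFint x).symm
    _ ≤ ∫ t : Fin d → ℝ, G t := by
        refine MeasureTheory.integral_mono (integrable_finset_sum _ fun x _ => hFint x) hGint ?_
        exact hpoint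
    _ = 2 ^ n * Real.sqrt 2 ^ d := by
        rw [hG, MeasureTheory.integral_const_mul, MeasureTheory.volume_pi,
          MeasureTheory.integral_fintype_prod_eq_pow h, hint_h, Fintype.card_fin]


lemma coe_orthonormal {n : ℕ} (V : Submodule ℝ (EuclideanSpace ℝ (Fin n))) :
    Orthonormal ℝ (fun i => ((stdOrthonormalBasis ℝ V i : V) : EuclideanSpace ℝ (Fin n))) := by
  constructor
  · intro i
    show ‖((stdOrthonormalBasis ℝ V i : V) : EuclideanSpace ℝ (Fin n))‖ = 1
    rw [Submodule.norm_coe]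
    exact (stdOrthonormalBasis ℝ V).orthonormal.1 i
  · intro i j hij
    show ⟪((stdOrthonormalBasis ℝ V i : V) : EuclideanSpace ℝ (Fin n)),
      ((stdOrthonormalBasis ℝ V j : V) : EuclideanSpace ℝ (Fin n))⟫ = 0
    rw [← Submodule.coe_inner]
    exact (stdOrthonormalBasis ℝ V).orthonormal.2 hij

lemma proj_norm_sq {n : ℕ} (V : Submodule ℝ (EuclideanSpace ℝ (Fin n)))
    (y : EuclideanSpace ℝ (Fin n)) :
    ‖(Submodule.orthogonalProjection V y : EuclideanSpace ℝ (Fin n))‖ ^ 2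
      = ∑ i, ⟪((stdOrthonormalBasis ℝ V i : V) : EuclideanSpace ℝ (Fin n)), y⟫ ^ 2 := by
  set b := stdOrthonormalBasis ℝ V with hb
  have hrep : ((Submodule.orthogonalProjection V y : V) : EuclideanSpace ℝ (Fin n))
      = ∑ i, ⟪((b i : V) : EuclideanSpace ℝ (Fin n)), y⟫ • ((b i : V) : EuclideanSpace ℝ (Fin n)) := by
    rw [b.orthogonalProjectionOnto_apply_eq_sum]
    push_cast
    rfl
  rw [hrep, ← real_inner_self_eq_norm_sq, (coe_orthonormal V).inner_sum]
  refine Finset.sum_congr rfl fun i _ => ?_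
  rw [RCLike.conj_to_real, sq]

/-- Counting bound for the bad set. -/
lemma bad_card {n : ℕ} (V : Submodule ℝ (EuclideanSpace ℝ (Fin n))) (u : ℝ) :
    ((cube n).filter
        (fun y => ¬ ‖(Submodule.orthogonalProjection V y : EuclideanSpace ℝ (Fin n))‖ ^ 2 ≤ 4 * u)).card
      * Real.exp u ≤ 2 ^ n * Real.sqrt 2 ^ (Module.finrank ℝ V) := by
  classical
  set B := (cube n).filter
      (fun y => ¬ ‖(Submodule.orthogonalProjection V y : EuclideanSpace ℝ (Fin n))‖ ^ 2 ≤ 4 * u) with hB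
  have h1 : (B.card : ℝ) * Real.exp u
      ≤ ∑ y ∈ B, Real.exp ((∑ i, ⟪((stdOrthonormalBasis ℝ V i : V) :
          EuclideanSpace ℝ (Fin n)), y⟫ ^ 2) / 4) := by
    have hle : ∀ y ∈ B, Real.exp u ≤ Real.exp ((∑ i, ⟪((stdOrthonormalBasis ℝ V i : V) :
        EuclideanSpace ℝ (Fin n)), y⟫ ^ 2) / 4) := by
      intro y hy
      rw [hB, Finset.mem_filter] at hy
      have h2 := lt_of_not_ge hy.2
      rw [proj_norm_sq] at h2
      exact Real.exp_le_exp.mpr (by linarith)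
    have := Finset.card_nsmul_le_sum B _ _ hle
    rw [nsmul_eq_mul] at this
    exact this
  have h2 : ∑ y ∈ B, Real.exp ((∑ i, ⟪((stdOrthonormalBasis ℝ V i : V) :
      EuclideanSpace ℝ (Fin n)), y⟫ ^ 2) / 4)
      ≤ ∑ y ∈ cube n, Real.exp ((∑ i, ⟪((stdOrthonormalBasis ℝ V i : V) :
        EuclideanSpace ℝ (Fin n)), y⟫ ^ 2) / 4) := by
    refine Finset.sum_le_sum_of_subset_of_nonneg (Finset.filter_subset _ _)
      (fun y _ _ => (Real.exp_pos _).le)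
  exact h1.trans (h2.trans (keyA _ (coe_orthonormal V)))


lemma exists_chain {n : ℕ} (C : Finset (EuclideanSpace ℝ (Fin n))) (R : ℝ) (k : ℕ)
    (hstep : ∀ V : Submodule ℝ (EuclideanSpace ℝ (Fin n)), Module.finrank ℝ V < k →
      ∃ y ∈ C, ‖(Submodule.orthogonalProjection V y : EuclideanSpace ℝ (Fin n))‖ ≤ R) :
    ∀ m, m ≤ k → ∃ x : Fin m → EuclideanSpace ℝ (Fin n),
      (∀ j, x j ∈ C) ∧
      ∀ j : Fin m, ‖(Submodule.orthogonalProjection (Submodule.span ℝ (x '' {i | i < j})) (x j) :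
        EuclideanSpace ℝ (Fin n))‖ ≤ R := by
  intro m
  induction m with
  | zero => exact fun _ => ⟨Fin.elim0, fun j => j.elim0, fun j => j.elim0⟩
  | succ m ih =>
    intro hmk
    classical
    obtain ⟨x, hxC, hxP⟩ := ih (Nat.le_of_succ_le hmk)
    have hdim : Module.finrank ℝ (Submodule.span ℝ (Set.range x)) < k := by
      have h1 := finrank_span_le_card (R := ℝ) (Set.range x)
      have h2 : (Set.range x).toFinset.card ≤ m := by
        rw [Set.toFinset_range]
        exact (Finset.card_image_le).trans (by simp)
      omega
    obtain ⟨y, hyC, hyP⟩ := hstep _ hdim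
    have hcomp : (Fin.snoc x y : Fin (m+1) → EuclideanSpace ℝ (Fin n)) ∘ Fin.castSucc = x :=
      funext fun i => by simp
    refine ⟨Fin.snoc x y, ?_, ?_⟩
    · intro j
      refine Fin.lastCases ?_ ?_ j
      · rw [Fin.snoc_last]; exact hyC
      · intro j0; rw [Fin.snoc_castSucc]; exact hxC j0
    · intro j
      refine Fin.lastCases ?_ ?_ j
      · have hset : (Fin.snoc x y : Fin (m+1) → EuclideanSpace ℝ (Fin n)) ''
            {i | i < Fin.last m} = Set.range x := by
          have h1 : {i : Fin (m+1) | i < Fin.last m} = Set.range (Fin.castSucc) := by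
            ext i
            simp [Fin.range_castSucc, Fin.lt_iff_val_lt_val]
          rw [h1, ← Set.range_comp, hcomp]
        rw [hset, Fin.snoc_last]
        exact hyP
      · intro j0
        have hset : (Fin.snoc x y : Fin (m+1) → EuclideanSpace ℝ (Fin n)) ''
            {i | i < Fin.castSucc j0} = x '' {i | i < j0} := by
          have h1 : {i : Fin (m+1) | i < Fin.castSucc j0}
              = Fin.castSucc '' {i : Fin m | i < j0} := by
            ext i
            constructor
            · intro hi
              have hi' : (i : ℕ) < (j0 : ℕ) := hi
              have hlt : (i : ℕ) < m := hi'.trans j0.isLt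
              refine ⟨⟨(i : ℕ), hlt⟩, ?_, Fin.ext rfl⟩
              rw [Set.mem_setOf_eq, Fin.lt_def]
              exact hi'
            · rintro ⟨i', hi', rfl⟩
              exact Fin.castSucc_lt_castSucc_iff.mpr hi'
          rw [h1, Set.image_image]
          simp_rw [Fin.snoc_castSucc]
        rw [hset, Fin.snoc_castSucc]
        exact hxP j0


end

end NearOrthogonalAux

open MeasureTheory Real in
/-- Generalization of Sherstov's Lemma 3.1: for all sufficiently small `δ > 0` and
sufficiently large `n`, every set `C ⊆ {−1,1}ⁿ` of size at least `2^(n−δn−1)` contains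
vectors `x₁, …, x_k`, `k = ⌈√δ·n⌉`, each of whose projections onto the span of the
previous ones has norm at most `2·δ^(1/4)·√n`. -/
theorem near_orthogonal_vectors :
    ∃ δ₀ : ℝ, 0 < δ₀ ∧ ∀ δ : ℝ, 0 < δ → δ ≤ δ₀ → ∃ N : ℕ, ∀ n : ℕ, N ≤ n →
      ∀ C : Finset (EuclideanSpace ℝ (Fin n)),
        (∀ x ∈ C, ∀ i, x i = 1 ∨ x i = -1) →
        (2 : ℝ) ^ ((n : ℝ) - δ * n - 1) ≤ (C.card : ℝ) →
        ∃ x : Fin (⌈Real.sqrt δ * n⌉₊) → EuclideanSpace ℝ (Fin n),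
          (∀ j, x j ∈ C) ∧
          ∀ j, ‖(Submodule.orthogonalProjection
              (Submodule.span ℝ (x '' {i | i < j})) (x j) : EuclideanSpace ℝ (Fin n))‖
            ≤ 2 * δ ^ ((1 : ℝ) / 4) * Real.sqrt n := by
  classical
  refine ⟨1/16, by norm_num, fun δ hδ0 hδ => ⟨⌈(4:ℝ)/Real.sqrt δ⌉₊, fun n hn C hCpm hCcard => ?_⟩⟩
  have hsd : 0 < Real.sqrt δ := Real.sqrt_pos.mpr hδ0
  have hn4 : 4 ≤ Real.sqrt δ * n := by
    have h1 : (4:ℝ)/Real.sqrt δ ≤ (⌈(4:ℝ)/Real.sqrt δ⌉₊ : ℝ) := Nat.le_ceil _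
    have h2 : ((⌈(4:ℝ)/Real.sqrt δ⌉₊ : ℕ) : ℝ) ≤ (n:ℝ) := Nat.cast_le.mpr hn
    have h3 : (4:ℝ)/Real.sqrt δ ≤ (n:ℝ) := h1.trans h2
    rw [div_le_iff₀ hsd] at h3
    linarith [mul_comm (n:ℝ) (Real.sqrt δ)]
  have hsd4 : Real.sqrt δ ≤ 1/4 := by
    have := Real.sqrt_le_sqrt hδ
    rwa [show (1/16:ℝ) = (1/4)^2 by norm_num, Real.sqrt_sq (by norm_num : (0:ℝ) ≤ 1/4)] at this
  set k := ⌈Real.sqrt δ * (n:ℝ)⌉₊ with hk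
  set R := 2 * δ ^ ((1:ℝ)/4) * Real.sqrt n with hR
  have hR0 : 0 ≤ R := by positivity
  have hRsq : R ^ 2 = 4 * (Real.sqrt δ * n) := by
    have h4 : (δ ^ ((1:ℝ)/4)) ^ 2 = Real.sqrt δ := by
      rw [← Real.rpow_natCast (δ ^ ((1:ℝ)/4)) 2, ← Real.rpow_mul hδ0.le, Real.sqrt_eq_rpow]
      norm_num
    rw [hR, mul_pow, mul_pow, h4, Real.sq_sqrt (Nat.cast_nonneg n)]
    ring
  have hCsub : C ⊆ cube n := fun y hy => mem_cube.mpr fun i => (hCpm y hy i).symm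
  have two_le_e : (2:ℝ) ≤ Real.exp 1 := by
    have := Real.add_one_le_exp (1:ℝ)
    linarith
  have sqrt2_le : Real.sqrt 2 ≤ Real.exp (1/2) := by
    have h1 : Real.sqrt 2 ≤ Real.sqrt (Real.exp 1) := Real.sqrt_le_sqrt two_le_e
    rwa [show Real.exp 1 = Real.exp (1/2) * Real.exp (1/2) by
        rw [← Real.exp_add]; norm_num,
      Real.sqrt_mul_self (Real.exp_pos _).le] at h1
  have hstep : ∀ V : Submodule ℝ (EuclideanSpace ℝ (Fin n)), Module.finrank ℝ V < k →
      ∃ y ∈ C, ‖(Submodule.orthogonalProjection V y : EuclideanSpace ℝ (Fin n))‖ ≤ R := by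
    intro V hV
    set d := Module.finrank ℝ V with hd
    set u := Real.sqrt δ * (n:ℝ) with hu
    set B := (cube n).filter
      (fun y => ¬ ‖(Submodule.orthogonalProjection V y : EuclideanSpace ℝ (Fin n))‖ ^ 2 ≤ 4 * u) with hB
    set B' := (cube n).filter
      (fun y => ¬ ‖(Submodule.orthogonalProjection V y : EuclideanSpace ℝ (Fin n))‖ ≤ R) with hB'
    have hB'B : B' ⊆ B := by
      intro y hy
      rw [hB', Finset.mem_filter] at hy
      rw [hB, Finset.mem_filter]
      refine ⟨hy.1, fun hle => hy.2 ?_⟩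
      rw [← hRsq] at hle
      have h5 := Real.sqrt_le_sqrt hle
      rwa [Real.sqrt_sq (norm_nonneg _), Real.sqrt_sq hR0] at h5
    -- numeric bound
    have hdlt : (d:ℝ) < u := by
      have h1 : (d:ℝ) + 1 ≤ (k:ℝ) := by exact_mod_cast hV
      have h2 : (k:ℝ) < u + 1 := Nat.ceil_lt_add_one (by positivity)
      linarith
    have hδn : δ * (n:ℝ) ≤ (1/4) * u := by
      have h1 : δ * (n:ℝ) = Real.sqrt δ * u := by
        rw [hu, ← mul_assoc, Real.mul_self_sqrt hδ0.le]
      rw [h1]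
      exact mul_le_mul_of_nonneg_right hsd4 (by positivity)
    have hkey : (2:ℝ) ^ n * Real.sqrt 2 ^ d < Real.exp u * (2:ℝ) ^ ((n:ℝ) - δ * n - 1) := by
      have e1 : (2:ℝ) ^ ((n:ℝ) - δ * n - 1) = (2:ℝ)^n * ((2:ℝ) ^ (δ * n + 1))⁻¹ := by
        rw [show ((n:ℝ) - δ * n - 1) = (n:ℝ) + (-(δ * n + 1)) by ring,
          Real.rpow_add (by norm_num : (0:ℝ) < 2), Real.rpow_natCast,
          Real.rpow_neg (by norm_num : (0:ℝ) ≤ 2)]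
      have e2 : (2:ℝ) ^ (δ * n + 1) ≤ Real.exp (δ * n + 1) := by
        calc (2:ℝ) ^ (δ * n + 1) ≤ (Real.exp 1) ^ (δ * n + 1) :=
              Real.rpow_le_rpow (by norm_num) two_le_e (by positivity)
          _ = Real.exp (δ * n + 1) := Real.exp_one_rpow _
      have e3 : Real.sqrt 2 ^ d ≤ Real.exp ((d:ℝ)/2) := by
        calc Real.sqrt 2 ^ d ≤ Real.exp (1/2) ^ d :=
              pow_le_pow_left₀ (Real.sqrt_nonneg 2) sqrt2_le d
          _ = Real.exp ((d:ℝ) * (1/2)) := (Real.exp_nat_mul _ d).symm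
          _ = Real.exp ((d:ℝ)/2) := by rw [mul_one_div]
      have e4 : Real.exp ((d:ℝ)/2) < Real.exp (u - (δ * n + 1)) := by
        rw [Real.exp_lt_exp]
        linarith
      have e5 : Real.exp (u - (δ * n + 1)) ≤ Real.exp u * ((2:ℝ) ^ (δ * n + 1))⁻¹ := by
        rw [Real.exp_sub, div_eq_mul_inv]
        refine mul_le_mul_of_nonneg_left ?_ (Real.exp_pos u).le
        exact inv_anti₀ (by positivity) e2
      rw [e1, show Real.exp u * ((2:ℝ)^n * ((2:ℝ) ^ (δ * n + 1))⁻¹)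
          = (2:ℝ)^n * (Real.exp u * ((2:ℝ) ^ (δ * n + 1))⁻¹) by ring]
      refine mul_lt_mul_of_pos_left ?_ (by positivity)
      exact lt_of_le_of_lt e3 (lt_of_lt_of_le e4 e5)
    have hcard : B.card < C.card := by
      have h1 := bad_card V u
      have h2 : (B.card : ℝ) * Real.exp u < Real.exp u * (C.card : ℝ) := by
        calc (B.card : ℝ) * Real.exp u ≤ (2:ℝ) ^ n * Real.sqrt 2 ^ d := h1
          _ < Real.exp u * (2:ℝ) ^ ((n:ℝ) - δ * n - 1) := hkey
          _ ≤ Real.exp u * (C.card : ℝ) :=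
              mul_le_mul_of_nonneg_left hCcard (Real.exp_pos u).le
      rw [mul_comm (Real.exp u) _] at h2
      have := lt_of_mul_lt_mul_right h2 (Real.exp_pos u).le
      exact_mod_cast this
    have hne : (C \ B').Nonempty := by
      rw [← Finset.card_pos]
      have h1 : B'.card < C.card := (Finset.card_le_card hB'B).trans_lt hcard
      have h2 := Finset.le_card_sdiff B' C
      omega
    obtain ⟨y, hy⟩ := hne
    rw [Finset.mem_sdiff] at hy
    refine ⟨y, hy.1, ?_⟩
    by_contra hnot
    exact hy.2 (by rw [hB', Finset.mem_filter]; exact ⟨hCsub hy.1, hnot⟩)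
  obtain ⟨x, hx1, hx2⟩ := exists_chain C R k hstep k le_rfl
  exact ⟨x, hx1, hx2⟩
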